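/- arXiv:1911.08424 — 3 statements merged into one kernel-verified Lean document; each statement's English description precedes it below -/
import Mathlib

section
/- Let I and R be positive integers, let η ∈ (0,1), and let A ∈ ℝ^{I×R} be any matrix. Let H ∈ ℝ^{I×I} be an orthogonal matrix all of whose entries have absolute value 1/√I (e.g., the normalized Hadamard transform), and for a sign vector d ∈ {−1,1}^I let D = diag(d). Then, for a uniformly random sign vector d (equivalently, for at least a (1−η)-fraction of the 2^I sign vectors d ∈ {−1,1}^I), with probability at least 1−η the coherence satisfies μ(H D A) ≤ 2 R ln(2 I R / η) / I. -/
open Matrix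

/-- The `i`-th leverage score of a real matrix `A`: the squared norm of the orthogonal
projection of the `i`-th standard basis vector onto the column space of `A`. -/
noncomputable def levScore {m : Type*} [Fintype m] [DecidableEq m] {n : Type*} [Fintype n]
    (A : Matrix m n ℝ) (i : m) : ℝ :=
  ‖(Submodule.orthogonalProjectionOnto
      (Submodule.span ℝ (Set.range fun j : n => (EuclideanSpace.equiv m ℝ).symm (fun k => A k j))))
      (EuclideanSpace.single i 1)‖ ^ 2

/-- The coherence of a real matrix: the maximum leverage score. -/
noncomputable def coherence {m : Type*} [Fintype m] [DecidableEq m] {n : Type*} [Fintype n]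
    (A : Matrix m n ℝ) : ℝ :=
  ⨆ i, levScore A i

/-- The ±1 diagonal matrix associated with a Boolean sign vector. -/
noncomputable def signDiag {I : ℕ} (d : Fin I → Bool) : Matrix (Fin I) (Fin I) ℝ :=
  Matrix.diagonal fun i => if d i then (1 : ℝ) else -1

/-- MGF bound for a Rademacher sum over all sign vectors. -/
lemma sum_exp_rademacher_le (n : ℕ) (x : Fin n → ℝ) (l : ℝ) :
    ∑ d : Fin n → Bool, Real.exp (l * ∑ k, (if d k then (1:ℝ) else -1) * x k)
      ≤ 2 ^ n * Real.exp (l ^ 2 * (∑ k, x k ^ 2) / 2) := by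
  have h1 : ∀ d : Fin n → Bool,
      Real.exp (l * ∑ k, (if d k then (1:ℝ) else -1) * x k)
        = ∏ k, Real.exp ((if d k then (1:ℝ) else -1) * (l * x k)) := by
    intro d
    rw [← Real.exp_sum, Finset.mul_sum]
    exact congrArg Real.exp (Finset.sum_congr rfl fun k _ => by ring)
  have h2 : ∑ d : Fin n → Bool, ∏ k, Real.exp ((if d k then (1:ℝ) else -1) * (l * x k))
      = ∏ k : Fin n, ∑ b : Bool, Real.exp ((if b then (1:ℝ) else -1) * (l * x k)) := by
    rw [Finset.prod_univ_sum]
    rw [Fintype.piFinset_univ]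
  simp only [h1, h2]
  have h3 : ∀ k : Fin n, ∑ b : Bool, Real.exp ((if b then (1:ℝ) else -1) * (l * x k))
      ≤ 2 * Real.exp ((l * x k) ^ 2 / 2) := by
    intro k
    have := Real.cosh_le_exp_half_sq (l * x k)
    rw [Real.cosh_eq] at this
    have h4 : Real.exp (l * x k) + Real.exp (-(l * x k)) ≤ 2 * Real.exp ((l * x k) ^ 2 / 2) := by
      nlinarith [this]
    simpa [Fintype.sum_bool, one_mul, neg_one_mul] using h4
  calc ∏ k : Fin n, ∑ b : Bool, Real.exp ((if b then (1:ℝ) else -1) * (l * x k))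
      ≤ ∏ k : Fin n, 2 * Real.exp ((l * x k) ^ 2 / 2) := by
        refine Finset.prod_le_prod (fun k _ => ?_) (fun k _ => h3 k)
        positivity
    _ = 2 ^ n * Real.exp (l ^ 2 * (∑ k, x k ^ 2) / 2) := by
        rw [Finset.prod_mul_distrib, Finset.prod_const, ← Real.exp_sum]
        simp only [Finset.card_univ, Fintype.card_fin]
        rw [← Finset.sum_div, Finset.mul_sum]
        congr 1
        exact congrArg Real.exp (congrArg (·/2) (Finset.sum_congr rfl fun k _ => by ring))

/-- One-sided Chernoff counting bound for Rademacher sums. -/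
lemma count_rademacher_ge_le (n : ℕ) (x : Fin n → ℝ) (t σ2 : ℝ)
    (hσ : ∑ k, x k ^ 2 ≤ σ2) (hσ0 : 0 < σ2) (ht : 0 ≤ t) :
    ((Finset.univ.filter fun d : Fin n → Bool =>
        t ≤ ∑ k, (if d k then (1:ℝ) else -1) * x k).card : ℝ)
      ≤ 2 ^ n * Real.exp (-t ^ 2 / (2 * σ2)) := by
  classical
  set l : ℝ := t / σ2 with hl
  have hl0 : 0 ≤ l := div_nonneg ht hσ0.le
  set S : (Fin n → Bool) → ℝ := fun d => ∑ k, (if d k then (1:ℝ) else -1) * x k with hS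
  have key : ((Finset.univ.filter fun d => t ≤ S d).card : ℝ) * Real.exp (l * t)
      ≤ ∑ d : Fin n → Bool, Real.exp (l * S d) := by
    calc ((Finset.univ.filter fun d => t ≤ S d).card : ℝ) * Real.exp (l * t)
        = ∑ _d ∈ Finset.univ.filter fun d => t ≤ S d, Real.exp (l * t) := by
          rw [Finset.sum_const, nsmul_eq_mul]
      _ ≤ ∑ d ∈ Finset.univ.filter fun d => t ≤ S d, Real.exp (l * S d) := by
          refine Finset.sum_le_sum fun d hd => ?_
          have := (Finset.mem_filter.mp hd).2
          exact Real.exp_le_exp.mpr (mul_le_mul_of_nonneg_left this hl0)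
      _ ≤ ∑ d : Fin n → Bool, Real.exp (l * S d) := by
          refine Finset.sum_le_sum_of_subset_of_nonneg (Finset.filter_subset _ _)
            fun d _ _ => (Real.exp_pos _).le
  have mgf := sum_exp_rademacher_le n x l
  have h2 : ((Finset.univ.filter fun d => t ≤ S d).card : ℝ)
      ≤ 2 ^ n * Real.exp (l ^ 2 * (∑ k, x k ^ 2) / 2) / Real.exp (l * t) := by
    rw [le_div_iff₀ (Real.exp_pos _)]
    exact key.trans mgf
  refine h2.trans ?_
  rw [div_le_iff₀ (Real.exp_pos _), mul_assoc, ← Real.exp_add]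
  have harg : l ^ 2 * (∑ k, x k ^ 2) / 2 ≤ -t ^ 2 / (2 * σ2) + l * t := by
    have h3 : l ^ 2 * (∑ k, x k ^ 2) / 2 ≤ l ^ 2 * σ2 / 2 := by
      have : (0:ℝ) ≤ l ^ 2 := sq_nonneg l
      nlinarith
    refine h3.trans ?_
    rw [hl]
    field_simp
    ring_nf
    nlinarith [sq_nonneg t, hσ0]
  have := Real.exp_le_exp.mpr harg
  nlinarith [Real.exp_pos (l ^ 2 * (∑ k, x k ^ 2) / 2), this,
    pow_pos (by norm_num : (0:ℝ) < 2) n]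

/-- Two-sided Chernoff counting bound for Rademacher sums. -/
lemma count_rademacher_abs_ge_le (n : ℕ) (x : Fin n → ℝ) (t σ2 : ℝ)
    (hσ : ∑ k, x k ^ 2 ≤ σ2) (hσ0 : 0 < σ2) (ht : 0 ≤ t) :
    ((Finset.univ.filter fun d : Fin n → Bool =>
        t ≤ |∑ k, (if d k then (1:ℝ) else -1) * x k|).card : ℝ)
      ≤ 2 ^ n * (2 * Real.exp (-t ^ 2 / (2 * σ2))) := by
  classical
  have hsplit : (Finset.univ.filter fun d : Fin n → Bool =>
        t ≤ |∑ k, (if d k then (1:ℝ) else -1) * x k|)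
      ⊆ (Finset.univ.filter fun d : Fin n → Bool =>
          t ≤ ∑ k, (if d k then (1:ℝ) else -1) * x k)
        ∪ (Finset.univ.filter fun d : Fin n → Bool =>
          t ≤ ∑ k, (if d k then (1:ℝ) else -1) * (-x) k) := by
    intro d hd
    have hd' := (Finset.mem_filter.mp hd).2
    rcases le_abs.mp hd' with h | h
    · exact Finset.mem_union_left _ (Finset.mem_filter.mpr ⟨Finset.mem_univ _, h⟩)
    · refine Finset.mem_union_right _ (Finset.mem_filter.mpr ⟨Finset.mem_univ _, ?_⟩)
      calc t ≤ -∑ k, (if d k then (1:ℝ) else -1) * x k := h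
        _ = ∑ k, (if d k then (1:ℝ) else -1) * (-x) k := by
            rw [← Finset.sum_neg_distrib]
            exact Finset.sum_congr rfl fun k _ => by rw [Pi.neg_apply, neg_mul_eq_mul_neg]
  have h1 := count_rademacher_ge_le n x t σ2 hσ hσ0 ht
  have h2 := count_rademacher_ge_le n (-x) t σ2 (by simpa using hσ) hσ0 ht
  have hcard : ((Finset.univ.filter fun d : Fin n → Bool =>
        t ≤ |∑ k, (if d k then (1:ℝ) else -1) * x k|).card : ℝ)
      ≤ ((Finset.univ.filter fun d : Fin n → Bool =>
          t ≤ ∑ k, (if d k then (1:ℝ) else -1) * x k).card : ℝ)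
        + ((Finset.univ.filter fun d : Fin n → Bool =>
          t ≤ ∑ k, (if d k then (1:ℝ) else -1) * (-x) k).card : ℝ) := by
    have := (Finset.card_le_card hsplit).trans (Finset.card_union_le _ _)
    exact_mod_cast this
  linarith

open RealInnerProductSpace in
/-- Norm of an orthogonal projection onto the span of an orthonormal family. -/
lemma norm_orthogonalProjection_span_sq {E : Type*} [NormedAddCommGroup E]
    [InnerProductSpace ℝ E] [FiniteDimensional ℝ E] {ι : Type*} [Fintype ι]
    (w : ι → E) (hw : Orthonormal ℝ w) (v : E) :
    ‖(Submodule.orthogonalProjectionOnto (Submodule.span ℝ (Set.range w)) v : E)‖ ^ 2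
      = ∑ j, (⟪w j, v⟫ : ℝ) ^ 2 := by
  classical
  set K := Submodule.span ℝ (Set.range w) with hK
  set y := ∑ j, (⟪w j, v⟫ : ℝ) • w j with hy
  have hyK : y ∈ K := Submodule.sum_mem _ fun j _ =>
    Submodule.smul_mem _ _ (Submodule.subset_span ⟨j, rfl⟩)
  have hproj : (Submodule.orthogonalProjectionOnto K v : E) = y := by
    refine Submodule.eq_starProjection_of_mem_of_inner_eq_zero hyK ?_
    intro z hz
    induction hz using Submodule.span_induction with
    | mem z hz =>
        obtain ⟨j, rfl⟩ := hz
        rw [inner_sub_left, hy, hw.inner_left_fintype]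
        simp [real_inner_comm]
    | zero => simp
    | add z₁ z₂ _ _ ih₁ ih₂ => rw [inner_add_right, ih₁, ih₂, add_zero]
    | smul c z _ ih => rw [inner_smul_right, ih, mul_zero]
  rw [hproj, hy]
  have := hw.inner_sum (fun j => (⟪w j, v⟫ : ℝ)) (fun j => (⟪w j, v⟫ : ℝ)) Finset.univ
  rw [← real_inner_self_eq_norm_sq]
  simpa [sq] using this

open RealInnerProductSpace in
lemma norm_orthogonalProjection_eq_sum {E : Type*} [NormedAddCommGroup E]
    [InnerProductSpace ℝ E] [FiniteDimensional ℝ E] {ι : Type*} [Fintype ι]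
    (w : ι → E) (hw : Orthonormal ℝ w) (K : Submodule ℝ E) [K.HasOrthogonalProjection]
    (hK : K = Submodule.span ℝ (Set.range w)) (v : E) :
    ‖Submodule.orthogonalProjectionOnto K v‖ ^ 2 = ∑ j, (⟪w j, v⟫ : ℝ) ^ 2 := by
  subst hK
  simpa using norm_orthogonalProjection_span_sq w hw v

open RealInnerProductSpace

/-- Coherence bound after a randomized Hadamard transform: for at least a `(1 - η)`-fraction
of the `2^I` sign vectors `d`, the coherence of `H D A` is at most `2 R ln(2 I R / η) / I`. -/
theorem coherence_randomizedHadamard (I R : ℕ) (hI : 0 < I) (hR : 0 < R)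
    (η : ℝ) (hη0 : 0 < η) (hη1 : η < 1)
    (A : Matrix (Fin I) (Fin R) ℝ)
    (H : Matrix (Fin I) (Fin I) ℝ)
    (hHorth : H * Hᵀ = 1)
    (hHabs : ∀ i j, |H i j| = 1 / Real.sqrt I) :
    (1 - η) * 2 ^ I ≤
      ((Finset.univ.filter fun d : Fin I → Bool =>
          coherence (H * signDiag d * A) ≤ 2 * R * Real.log (2 * I * R / η) / I).card : ℝ) := by
  classical
  have hI1 : (1:ℝ) ≤ (I:ℝ) := by exact_mod_cast hI
  have hR1 : (1:ℝ) ≤ (R:ℝ) := by exact_mod_cast hR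
  have hI0 : (0:ℝ) < (I:ℝ) := by positivity
  -- column space of A and an orthonormal basis of it
  set colA : Fin R → EuclideanSpace ℝ (Fin I) :=
    fun j => (EuclideanSpace.equiv (Fin I) ℝ).symm (fun k => A k j) with hcolA
  set S₀ : Submodule ℝ (EuclideanSpace ℝ (Fin I)) := Submodule.span ℝ (Set.range colA) with hS₀
  set r : ℕ := Module.finrank ℝ S₀ with hr
  have hrR : r ≤ R := by
    have := finrank_range_le_card (R := ℝ) colA
    simpa [Set.finrank, hr, hS₀] using this
  set u := stdOrthonormalBasis ℝ S₀ with hu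
  set w0 : Fin r → EuclideanSpace ℝ (Fin I) := (S₀.subtypeₗᵢ) ∘ u with hw0def
  have hw0 : Orthonormal ℝ w0 := u.orthonormal.comp_linearIsometry _
  have hspan0 : Submodule.span ℝ (Set.range w0) = S₀ := by
    have h1 : Submodule.span ℝ (Set.range (⇑u)) = (⊤ : Submodule ℝ S₀) := by
      simpa using u.toBasis.span_eq
    have h2 : Set.range w0 = S₀.subtype '' Set.range (⇑u) := by
      rw [hw0def, Set.range_comp]; rfl
    rw [h2, ← Submodule.map_span, h1, Submodule.map_top, Submodule.range_subtype]
  -- log and threshold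
  set Lg := Real.log (2 * (I:ℝ) * (R:ℝ) / η) with hLg
  have hLgpos : (0:ℝ) < 2 * (I:ℝ) * (R:ℝ) / η := by positivity
  have hLg0 : 0 ≤ Lg := Real.log_nonneg (by rw [le_div_iff₀ hη0]; nlinarith)
  set t := Real.sqrt (2 * Lg / (I:ℝ)) with htdef
  have ht0 : 0 ≤ t := Real.sqrt_nonneg _
  have ht2 : t ^ 2 = 2 * Lg / (I:ℝ) := Real.sq_sqrt (by positivity)
  -- the orthogonal matrices
  set M : (Fin I → Bool) → Matrix (Fin I) (Fin I) ℝ := fun d => H * signDiag d with hM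
  have hMtM : ∀ d, (M d)ᵀ * (M d) = 1 := by
    intro d
    have hDD : signDiag d * (signDiag d)ᵀ = 1 := by
      rw [signDiag, Matrix.diagonal_transpose, Matrix.diagonal_mul_diagonal]
      have he : ((fun i => (if d i then (1:ℝ) else -1) * (if d i then (1:ℝ) else -1)))
          = fun _ => (1:ℝ) := funext fun i => by cases d i <;> norm_num
      rw [he]; exact Matrix.diagonal_one
    have hMMt : M d * (M d)ᵀ = 1 := by
      show H * signDiag d * (H * signDiag d)ᵀ = 1
      rw [Matrix.transpose_mul, mul_assoc, ← mul_assoc (signDiag d), hDD, one_mul, hHorth]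
    exact mul_eq_one_comm.mp hMMt
  -- the associated linear isometries
  have hinner : ∀ d (x y : EuclideanSpace ℝ (Fin I)),
      (⟪(EuclideanSpace.equiv (Fin I) ℝ).symm ((M d).mulVec ((EuclideanSpace.equiv (Fin I) ℝ) x)),
        (EuclideanSpace.equiv (Fin I) ℝ).symm ((M d).mulVec ((EuclideanSpace.equiv (Fin I) ℝ) y))⟫ : ℝ) = ⟪x, y⟫ := by
    intro d x y
    have key : ∀ a b : Fin I → ℝ, ((M d).mulVec a) ⬝ᵥ ((M d).mulVec b) = a ⬝ᵥ b := by
      intro a b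
      calc (M d *ᵥ a) ⬝ᵥ (M d *ᵥ b) = (a ᵥ* (M d)ᵀ) ⬝ᵥ (M d *ᵥ b) := by
            rw [Matrix.vecMul_transpose]
        _ = ((a ᵥ* (M d)ᵀ) ᵥ* (M d)) ⬝ᵥ b := by rw [Matrix.dotProduct_mulVec]
        _ = (a ᵥ* ((M d)ᵀ * M d)) ⬝ᵥ b := by rw [Matrix.vecMul_vecMul]
        _ = a ⬝ᵥ b := by rw [hMtM d, Matrix.vecMul_one]
    simp only [PiLp.inner_apply, RCLike.inner_apply, conj_trivial]
    rw [← dotProduct, ← dotProduct]; exact key _ _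
  set f : (Fin I → Bool) → (EuclideanSpace ℝ (Fin I) →ₗ[ℝ] EuclideanSpace ℝ (Fin I)) :=
    fun d =>
      { toFun := fun x => (EuclideanSpace.equiv (Fin I) ℝ).symm
          ((M d).mulVec ((EuclideanSpace.equiv (Fin I) ℝ) x))
        map_add' := fun x y => by
          simp [Matrix.mulVec_add]
        map_smul' := fun c x => by
          simp [Matrix.mulVec_smul] } with hf
  set T : (Fin I → Bool) → (EuclideanSpace ℝ (Fin I) →ₗᵢ[ℝ] EuclideanSpace ℝ (Fin I)) :=
    fun d => (f d).isometryOfInner (hinner d) with hT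
  set w : (Fin I → Bool) → Fin r → EuclideanSpace ℝ (Fin I) := fun d j => T d (w0 j) with hwdef
  have hworth : ∀ d, Orthonormal ℝ (w d) := fun d => hw0.comp_linearIsometry (T d)
  have hspanw : ∀ d, Submodule.span ℝ (Set.range (w d)) =
      Submodule.span ℝ (Set.range fun j : Fin R =>
        (EuclideanSpace.equiv (Fin I) ℝ).symm (fun k => (H * signDiag d * A) k j)) := by
    intro d
    have hcol : (fun j : Fin R =>
        (EuclideanSpace.equiv (Fin I) ℝ).symm (fun k => (H * signDiag d * A) k j))
        = fun j => T d (colA j) := by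
      funext j
      show (EuclideanSpace.equiv (Fin I) ℝ).symm (fun k => (H * signDiag d * A) k j)
          = (EuclideanSpace.equiv (Fin I) ℝ).symm
            ((M d).mulVec ((EuclideanSpace.equiv (Fin I) ℝ) (colA j)))
      refine congrArg _ (funext fun k => ?_)
      show (H * signDiag d * A) k j = (fun l => (M d) k l) ⬝ᵥ (fun l => A l j)
      rw [dotProduct, Matrix.mul_apply]
    rw [hcol]
    have e1 : Submodule.span ℝ (Set.range fun j => T d (colA j))
        = Submodule.map (T d).toLinearMap S₀ := by
      rw [hS₀, Submodule.map_span, ← Set.range_comp]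
      rfl
    have e2 : Submodule.span ℝ (Set.range (w d)) = Submodule.map (T d).toLinearMap S₀ := by
      rw [← hspan0, Submodule.map_span, ← Set.range_comp]
      rfl
    rw [e2, e1]
  have hlev : ∀ d i, levScore (H * signDiag d * A) i
      = ∑ j : Fin r, (⟪w d j, EuclideanSpace.single i 1⟫ : ℝ) ^ 2 := by
    intro d i
    unfold levScore
    exact norm_orthogonalProjection_eq_sum (w d) (hworth d) _ (hspanw d).symm _
  have hentry : ∀ d i j, (⟪w d j, EuclideanSpace.single i 1⟫ : ℝ)
      = ∑ k, (if d k then (1:ℝ) else -1) * (H i k * w0 j k) := by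
    intro d i j
    rw [real_inner_comm, EuclideanSpace.inner_single_left]
    simp only [_root_.map_one, one_mul]
    have hwe : w d j = (EuclideanSpace.equiv (Fin I) ℝ).symm
        ((M d).mulVec ((EuclideanSpace.equiv (Fin I) ℝ) (w0 j))) := rfl
    rw [hwe]
    show ((M d).mulVec (w0 j)) i = _
    show (fun l => (M d) i l) ⬝ᵥ (w0 j) = _
    rw [dotProduct]
    refine Finset.sum_congr rfl fun k _ => ?_
    show (H * signDiag d) i k * w0 j k = _
    rw [signDiag, Matrix.mul_diagonal]
    ring
  have hvar : ∀ i j, ∑ k, (H i k * w0 j k) ^ 2 ≤ 1 / (I:ℝ) := by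
    intro i j
    have hn : ‖w0 j‖ = 1 := hw0.1 j
    have hsum : ∑ k, (w0 j k) ^ 2 = 1 := by
      have h2 : (⟪w0 j, w0 j⟫ : ℝ) = ∑ k, w0 j k * w0 j k := by
        rw [PiLp.inner_apply]; simp [RCLike.inner_apply, sq]
      have h3 := real_inner_self_eq_norm_sq (w0 j)
      rw [h2, hn, one_pow] at h3
      rw [← h3]
      exact Finset.sum_congr rfl fun k _ => pow_two (w0 j k)
    have hterm : ∀ k, (H i k * w0 j k)^2 = (1/(I:ℝ)) * (w0 j k)^2 := by
      intro k
      have hH2 : (H i k)^2 = 1/(I:ℝ) := by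
        rw [← sq_abs, hHabs, div_pow, one_pow, Real.sq_sqrt (le_of_lt hI0)]
      rw [mul_pow, hH2]
    refine le_of_eq ?_
    rw [Finset.sum_congr rfl fun k _ => hterm k, ← Finset.mul_sum, hsum, mul_one]
  -- the good event
  set P : (Fin I → Bool) → Prop := fun d => ∀ (i : Fin I) (j : Fin r),
    |∑ k, (if d k then (1:ℝ) else -1) * (H i k * w0 j k)| ≤ t with hP
  have hPsub : Finset.univ.filter P ⊆ Finset.univ.filter (fun d : Fin I → Bool =>
      coherence (H * signDiag d * A) ≤ 2 * R * Real.log (2 * I * R / η) / I) := by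
    intro d hd
    have hdP := (Finset.mem_filter.mp hd).2
    refine Finset.mem_filter.mpr ⟨Finset.mem_univ _, ?_⟩
    have : Nonempty (Fin I) := ⟨⟨0, hI⟩⟩
    unfold coherence
    refine ciSup_le fun i => ?_
    rw [hlev d i]
    have hb : ∀ j : Fin r, (⟪w d j, EuclideanSpace.single i 1⟫ : ℝ)^2 ≤ t^2 := by
      intro j
      rw [hentry d i j, ← sq_abs]
      exact pow_le_pow_left₀ (abs_nonneg _) (hdP i j) 2
    calc ∑ j : Fin r, (⟪w d j, EuclideanSpace.single i 1⟫ : ℝ)^2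
        ≤ ∑ _j : Fin r, t^2 := Finset.sum_le_sum fun j _ => hb j
      _ = r * t^2 := by rw [Finset.sum_const, Finset.card_univ, Fintype.card_fin, nsmul_eq_mul]
      _ ≤ R * t^2 := by
          have hc : (r:ℝ) ≤ R := by exact_mod_cast hrR
          nlinarith [sq_nonneg t]
      _ = 2 * R * Real.log (2 * I * R / η) / I := by rw [ht2, hLg]; ring
  have hbad : ((Finset.univ.filter fun d : Fin I → Bool => ¬ P d).card : ℝ) ≤ η * 2 ^ I := by
    have hsub : (Finset.univ.filter fun d : Fin I → Bool => ¬ P d) ⊆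
        Finset.univ.biUnion (fun p : Fin I × Fin r =>
          Finset.univ.filter fun d : Fin I → Bool =>
            t ≤ |∑ k, (if d k then (1:ℝ) else -1) * (H p.1 k * w0 p.2 k)|) := by
      intro d hd
      have hdP := (Finset.mem_filter.mp hd).2
      have hdP2 : ¬ ∀ (i : Fin I) (j : Fin r),
          |∑ k, (if d k then (1:ℝ) else -1) * (H i k * w0 j k)| ≤ t := hdP
      push_neg at hdP2
      obtain ⟨i, j, hij⟩ := hdP2
      exact Finset.mem_biUnion.mpr ⟨(i,j), Finset.mem_univ _,
        Finset.mem_filter.mpr ⟨Finset.mem_univ _, hij.le⟩⟩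
    have hIinv : (0:ℝ) < 1/(I:ℝ) := by positivity
    have hexp : Real.exp (-t^2/(2 * (1/(I:ℝ)))) = η / (2 * I * R) := by
      have h1 : -t^2/(2*(1/(I:ℝ))) = -Lg := by rw [ht2]; field_simp
      rw [h1, Real.exp_neg, hLg, Real.exp_log hLgpos, inv_div]
    have heach : ∀ p : Fin I × Fin r,
        ((Finset.univ.filter fun d : Fin I → Bool =>
          t ≤ |∑ k, (if d k then (1:ℝ) else -1) * (H p.1 k * w0 p.2 k)|).card : ℝ)
        ≤ 2 ^ I * (2 * (η / (2 * I * R))) := by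
      intro p
      have hc := count_rademacher_abs_ge_le I (fun k => H p.1 k * w0 p.2 k) t (1/(I:ℝ))
        (hvar p.1 p.2) hIinv ht0
      rwa [hexp] at hc
    have hcard : ((Finset.univ.filter fun d : Fin I → Bool => ¬ P d).card : ℝ)
        ≤ ((I:ℝ) * r) * (2 ^ I * (2 * (η / (2 * I * R)))) := by
      have h1 := Finset.card_le_card hsub
      have h2 := Finset.card_biUnion_le (s := (Finset.univ : Finset (Fin I × Fin r)))
        (t := fun p => Finset.univ.filter fun d : Fin I → Bool =>
          t ≤ |∑ k, (if d k then (1:ℝ) else -1) * (H p.1 k * w0 p.2 k)|)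
      have h3 : ((Finset.univ.filter fun d : Fin I → Bool => ¬ P d).card : ℝ)
          ≤ ∑ p : Fin I × Fin r, ((Finset.univ.filter fun d : Fin I → Bool =>
            t ≤ |∑ k, (if d k then (1:ℝ) else -1) * (H p.1 k * w0 p.2 k)|).card : ℝ) := by
        exact_mod_cast h1.trans h2
      refine h3.trans ?_
      calc ∑ p : Fin I × Fin r, ((Finset.univ.filter fun d : Fin I → Bool =>
            t ≤ |∑ k, (if d k then (1:ℝ) else -1) * (H p.1 k * w0 p.2 k)|).card : ℝ)
          ≤ ∑ _p : Fin I × Fin r, 2^I * (2 * (η/(2*I*R))) :=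
            Finset.sum_le_sum fun p _ => heach p
        _ = ((I:ℝ) * r) * (2 ^ I * (2 * (η / (2 * I * R)))) := by
            rw [Finset.sum_const, Finset.card_univ, Fintype.card_prod, Fintype.card_fin,
              Fintype.card_fin, nsmul_eq_mul]
            push_cast
            ring
    refine hcard.trans ?_
    have hrR' : (r:ℝ) ≤ R := by exact_mod_cast hrR
    have key : ((I:ℝ)*r)*(2^I*(2*(η/(2*(I:ℝ)*R)))) = η*2^I*((r:ℝ)/R) := by
      field_simp
    rw [key]
    have hq : (r:ℝ)/R ≤ 1 := (div_le_one (by positivity)).mpr hrR'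
    have hpos : (0:ℝ) ≤ η * 2 ^ I := by positivity
    exact mul_le_of_le_one_right hpos hq
  -- conclusion
  have hsplit := Finset.card_filter_add_card_filter_not (s := (Finset.univ : Finset (Fin I → Bool))) (p := P)
  have hcardP : ((Finset.univ.filter P).card : ℝ)
      ≤ ((Finset.univ.filter fun d : Fin I → Bool =>
          coherence (H * signDiag d * A) ≤ 2 * R * Real.log (2 * I * R / η) / I).card : ℝ) := by
    exact_mod_cast Finset.card_le_card hPsub
  have huniv : ((Finset.univ : Finset (Fin I → Bool)).card : ℝ) = 2 ^ I := by
    simp [Finset.card_univ]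
  have : ((Finset.univ.filter P).card : ℝ)
      + ((Finset.univ.filter fun d : Fin I → Bool => ¬ P d).card : ℝ) = 2 ^ I := by
    rw [← huniv]; exact_mod_cast hsplit
  linarith
end

section
/- Let P and R be positive integers and, for each p ∈ [P], let A^(p) ∈ ℝ^{I_p×R} be a matrix. Then the coherence of the Khatri–Rao product satisfies μ(⊙_{p=1}^P A^(p)) ≤ ∏_{p=1}^P μ(A^(p)). -/
open Matrix

/-- The Khatri–Rao product of matrices `A p : ℝ^{I_p × R}`, `p ∈ [P]`: the matrix of size
`(I_1 ⋯ I_P) × R` whose entry indexed by `(i_1, …, i_P)` and `r` is `∏ p, (A p) (i p) r`. -/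
noncomputable def khatriRao {P R : ℕ} {Ip : Fin P → ℕ}
    (A : (p : Fin P) → Matrix (Fin (Ip p)) (Fin R) ℝ) :
    Matrix ((p : Fin P) → Fin (Ip p)) (Fin R) ℝ :=
  Matrix.of fun i r => ∏ p, A p (i p) r

open scoped RealInnerProductSpace

/-- The elementary tensor of vectors `u p ∈ ℝ^{I_p}`. -/
noncomputable def tens {P : ℕ} {Ip : Fin P → ℕ}
    (u : ∀ p, EuclideanSpace ℝ (Fin (Ip p))) :
    EuclideanSpace ℝ ((p : Fin P) → Fin (Ip p)) :=
  (EuclideanSpace.equiv _ ℝ).symm fun j => ∏ p, u p (j p)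

lemma tens_apply {P : ℕ} {Ip : Fin P → ℕ} (u : ∀ p, EuclideanSpace ℝ (Fin (Ip p)))
    (j : (p : Fin P) → Fin (Ip p)) : tens u j = ∏ p, u p (j p) := rfl

lemma inner_tens {P : ℕ} {Ip : Fin P → ℕ} (u v : ∀ p, EuclideanSpace ℝ (Fin (Ip p))) :
    ⟪tens u, tens v⟫ = ∏ p, ⟪u p, v p⟫ := by
  simp only [PiLp.inner_apply, RCLike.inner_apply, conj_trivial, tens_apply]
  rw [Fintype.prod_sum]
  congr 1
  ext j
  rw [← Finset.prod_mul_distrib]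

lemma norm_tens_sq {P : ℕ} {Ip : Fin P → ℕ} (u : ∀ p, EuclideanSpace ℝ (Fin (Ip p))) :
    ‖tens u‖ ^ 2 = ∏ p, ‖u p‖ ^ 2 := by
  rw [← real_inner_self_eq_norm_sq, inner_tens]
  exact Finset.prod_congr rfl fun p _ => real_inner_self_eq_norm_sq _

lemma single_eq_tens {P : ℕ} {Ip : Fin P → ℕ} (i : (p : Fin P) → Fin (Ip p)) :
    (EuclideanSpace.single i (1:ℝ)) = tens (fun p => EuclideanSpace.single (i p) 1) := by
  ext j
  simp only [EuclideanSpace.single_apply, tens_apply]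
  by_cases h : j = i
  · subst h; simp
  · rw [if_neg h]
    obtain ⟨p, hp⟩ : ∃ p, j p ≠ i p := by
      by_contra hc; push_neg at hc; exact h (funext hc)
    exact (Finset.prod_eq_zero (Finset.mem_univ p) (by simp [hp])).symm

lemma norm_proj_mono {E : Type*} [NormedAddCommGroup E] [InnerProductSpace ℝ E]
    {U V : Submodule ℝ E} [Submodule.HasOrthogonalProjection U] [Submodule.HasOrthogonalProjection V]
    (h : U ≤ V) (x : E) :
    ‖Submodule.orthogonalProjectionOnto U x‖ ≤ ‖Submodule.orthogonalProjectionOnto V x‖ := by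
  rw [← Submodule.orthogonalProjectionOnto_starProjection_of_le h x]
  calc ‖Submodule.orthogonalProjectionOnto U (Submodule.orthogonalProjectionOnto V x)‖
      ≤ ‖Submodule.orthogonalProjectionOnto U‖ * ‖((Submodule.orthogonalProjectionOnto V x : E))‖ :=
        (Submodule.orthogonalProjectionOnto U).le_opNorm _
    _ ≤ 1 * ‖Submodule.orthogonalProjectionOnto V x‖ := by
        have h1 : ‖Submodule.orthogonalProjectionOnto U‖ ≤ 1 := Submodule.orthogonalProjectionOnto_norm_le U
        have h2 : ‖((Submodule.orthogonalProjectionOnto V x : E))‖ = ‖Submodule.orthogonalProjectionOnto V x‖ := rfl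
        rw [h2]
        exact mul_le_mul_of_nonneg_right h1 (norm_nonneg _)
    _ = _ := one_mul _

lemma levScore_nonneg {m : Type*} [Fintype m] [DecidableEq m] {n : Type*} [Fintype n]
    (A : Matrix m n ℝ) (i : m) : 0 ≤ levScore A i := by
  unfold levScore; positivity

/-- The coherence of a Khatri–Rao product is at most the product of the coherences. -/
theorem coherence_khatriRao_le (P R : ℕ) (hP : 0 < P) (hR : 0 < R)
    (Ip : Fin P → ℕ) (hIp : ∀ p, 0 < Ip p)
    (A : (p : Fin P) → Matrix (Fin (Ip p)) (Fin R) ℝ) :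
    coherence (khatriRao A) ≤ ∏ p, coherence (A p) := by
  haveI : ∀ p, Nonempty (Fin (Ip p)) := fun p => ⟨⟨0, hIp p⟩⟩
  haveI : Nonempty ((p : Fin P) → Fin (Ip p)) := ⟨fun p => ⟨0, hIp p⟩⟩
  -- the column space of each factor
  set U : (p : Fin P) → Submodule ℝ (EuclideanSpace ℝ (Fin (Ip p))) :=
    fun p => Submodule.span ℝ
      (Set.range fun j : Fin R => (EuclideanSpace.equiv (Fin (Ip p)) ℝ).symm (fun k => A p k j))
    with hU
  -- the span of elementary tensors with factors in the column spaces
  set V : Submodule ℝ (EuclideanSpace ℝ ((p : Fin P) → Fin (Ip p))) :=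
    Submodule.span ℝ
      { v | ∃ u : ∀ p, EuclideanSpace ℝ (Fin (Ip p)), (∀ p, u p ∈ U p) ∧ v = tens u } with hV
  -- the column space of the Khatri–Rao product
  set W : Submodule ℝ (EuclideanSpace ℝ ((p : Fin P) → Fin (Ip p))) :=
    Submodule.span ℝ (Set.range fun j : Fin R =>
      (EuclideanSpace.equiv ((p : Fin P) → Fin (Ip p)) ℝ).symm (fun k => khatriRao A k j))
    with hW
  have hWV : W ≤ V := by
    rw [hW, Submodule.span_le]
    rintro x ⟨r, rfl⟩
    apply Submodule.subset_span
    refine ⟨fun p => (EuclideanSpace.equiv (Fin (Ip p)) ℝ).symm (fun k => A p k r),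
      fun p => Submodule.subset_span ⟨r, rfl⟩, ?_⟩
    ext j
    simp [tens_apply, khatriRao]
  have key : ∀ i, levScore (khatriRao A) i ≤ ∏ p, levScore (A p) (i p) := by
    intro i
    set w : EuclideanSpace ℝ ((p : Fin P) → Fin (Ip p)) :=
      tens (fun p => (Submodule.orthogonalProjectionOnto (U p) (EuclideanSpace.single (i p) 1) :
        EuclideanSpace ℝ (Fin (Ip p)))) with hw
    have hwV : w ∈ V := Submodule.subset_span ⟨_, fun p => SetLike.coe_mem _, rfl⟩
    have horth : ∀ z ∈ V, ⟪EuclideanSpace.single i 1 - w, z⟫ = 0 := by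
      intro z hz
      induction hz using Submodule.span_induction with
      | mem x hx =>
        obtain ⟨v, hv, rfl⟩ := hx
        rw [inner_sub_left, single_eq_tens, hw, inner_tens, inner_tens, sub_eq_zero]
        refine Finset.prod_congr rfl fun p _ => ?_
        have h0 := Submodule.starProjection_inner_eq_zero
          (EuclideanSpace.single (i p) 1) (v p) (hv p)
        rw [inner_sub_left, sub_eq_zero] at h0
        exact h0
      | zero => simp
      | add x y _ _ hx hy => rw [inner_add_right, hx, hy, add_zero]
      | smul c x _ hx => rw [inner_smul_right, hx, mul_zero]
    have hproj : ((Submodule.orthogonalProjectionOnto V (EuclideanSpace.single i 1) :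
        EuclideanSpace ℝ ((p : Fin P) → Fin (Ip p)))) = w :=
      Submodule.eq_starProjection_of_mem_of_inner_eq_zero hwV horth
    have h2 : ‖Submodule.orthogonalProjectionOnto W (EuclideanSpace.single i 1)‖ ≤
        ‖Submodule.orthogonalProjectionOnto V (EuclideanSpace.single i 1)‖ := norm_proj_mono hWV _
    have h1 : levScore (khatriRao A) i =
        ‖Submodule.orthogonalProjectionOnto W (EuclideanSpace.single i 1)‖ ^ 2 := rfl
    rw [h1]
    calc ‖Submodule.orthogonalProjectionOnto W (EuclideanSpace.single i 1)‖ ^ 2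
        ≤ ‖Submodule.orthogonalProjectionOnto V (EuclideanSpace.single i 1)‖ ^ 2 :=
          pow_le_pow_left₀ (norm_nonneg _) h2 2
      _ = ‖w‖ ^ 2 := by
          rw [show ‖Submodule.orthogonalProjectionOnto V (EuclideanSpace.single i 1)‖ =
            ‖((Submodule.orthogonalProjectionOnto V (EuclideanSpace.single i 1) :
              EuclideanSpace ℝ ((p : Fin P) → Fin (Ip p))))‖ from rfl, hproj]
      _ = ∏ p, levScore (A p) (i p) := by rw [hw, norm_tens_sq]; rfl
  unfold coherence
  refine ciSup_le fun i => ?_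
  refine (key i).trans (Finset.prod_le_prod (fun p _ => levScore_nonneg _ _) fun p _ => ?_)
  exact le_ciSup (Set.Finite.bddAbove (Set.finite_range _)) (i p)
end

section
/- Let P and R be positive integers, let η ∈ (0,1), and for each p ∈ [P] let X^(p) ∈ ℝ^{I_p×R} be a matrix and H^(p) ∈ ℝ^{I_p×I_p} an orthogonal matrix all of whose entries have absolute value 1/√I_p. For sign vectors d^(1) ∈ {−1,1}^{I_1},…,d^(P) ∈ {−1,1}^{I_P} let D^(p) = diag(d^(p)). Then, if the sign vectors d^(1),…,d^(P) are drawn independently and uniformly at random, with probability at least 1 − Pη the coherence of the Khatri–Rao product of the transformed factors satisfies μ(⊙_{p=1}^P H^(p) D^(p) X^(p)) ≤ (1/Ĩ) ∏_{p=1}^P 2R ln(2 I_p R / η), where Ĩ = I_1 I_2 ⋯ I_P. -/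
open Matrix

open RealInnerProductSpace in
lemma proj_sq_le_sum {m κ : Type*} [Fintype m] [Fintype κ]
    (x : EuclideanSpace ℝ m) (V : Submodule ℝ (EuclideanSpace ℝ m))
    (w : κ → EuclideanSpace ℝ m) (hw : Orthonormal ℝ w)
    (hV : V ≤ Submodule.span ℝ (Set.range w)) :
    ‖(Submodule.orthogonalProjectionOnto V x : EuclideanSpace ℝ m)‖ ^ 2 ≤ ∑ s, ⟪x, w s⟫ ^ 2 := by
  classical
  set y : EuclideanSpace ℝ m := (Submodule.orthogonalProjectionOnto V x : EuclideanSpace ℝ m) with hy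
  have hxy : ⟪x, y⟫ = ‖y‖ ^ 2 := by
    have h0 : ⟪x - y, y⟫ = 0 :=
      V.starProjection_inner_eq_zero x y (Submodule.orthogonalProjectionOnto V x).2
    have := inner_sub_left (𝕜 := ℝ) x y y
    rw [h0] at this
    rw [real_inner_self_eq_norm_sq] at this
    linarith [this]
  obtain ⟨c, hc⟩ := (Submodule.mem_span_range_iff_exists_fun ℝ).1 (hV (Submodule.orthogonalProjectionOnto V x).2)
  rw [← hy] at hc
  have hyc : ∑ s, c s ^ 2 = ‖y‖ ^ 2 := by
    have h2 := hw.inner_sum c c Finset.univ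
    rw [hc] at h2
    rw [← real_inner_self_eq_norm_sq, h2]
    simp [sq]
  have hinner : ⟪x, y⟫ = ∑ s, c s * ⟪x, w s⟫ := by
    rw [← hc, inner_sum]
    simp only [real_inner_smul_right, Finset.mul_sum]
  have hcs := Finset.sum_mul_sq_le_sq_mul_sq Finset.univ c (fun s => ⟪x, w s⟫)
  simp only [← hinner, hxy, hyc] at hcs
  have hsumnn : (0:ℝ) ≤ ∑ s, ⟪x, w s⟫ ^ 2 := by positivity
  rcases eq_or_lt_of_le (norm_nonneg y) with h0 | h0
  · rw [← h0]; simpa using hsumnn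
  · have h2 : (0:ℝ) < ‖y‖ ^ 2 := by positivity
    nlinarith [hcs]

lemma euclid_sum_apply {ι m : Type*} [Fintype m] (s : Finset ι) (f : ι → EuclideanSpace ℝ m)
    (j : m) : (∑ i ∈ s, f i) j = ∑ i ∈ s, f i j := by
  exact map_sum (EuclideanSpace.projₗ (𝕜 := ℝ) (ι := m) j) f s

lemma levScore_le_sum_sq {m κ : Type*} [Fintype m] [DecidableEq m] {n : Type*} [Fintype n]
    [Fintype κ] (A : Matrix m n ℝ) (w : κ → EuclideanSpace ℝ m) (hw : Orthonormal ℝ w)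
    (hA : Submodule.span ℝ (Set.range fun j : n =>
        (EuclideanSpace.equiv m ℝ).symm (fun k => A k j)) ≤ Submodule.span ℝ (Set.range w))
    (i : m) : levScore A i ≤ ∑ s, (w s i) ^ 2 := by
  have h := proj_sq_le_sum (EuclideanSpace.single i 1) _ w hw hA
  refine h.trans (le_of_eq ?_)
  apply Finset.sum_congr rfl; intro s _
  rw [EuclideanSpace.inner_single_left]
  simp

lemma coherence_khatriRao_le_s4 {P R : ℕ} {Ip : Fin P → ℕ} (hIp : ∀ p, 0 < Ip p)
    (A : (p : Fin P) → Matrix (Fin (Ip p)) (Fin R) ℝ)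
    (k : Fin P → ℕ) (hk : ∀ p, (k p : ℝ) ≤ R)
    (v : (p : Fin P) → Fin (k p) → EuclideanSpace ℝ (Fin (Ip p)))
    (hv : ∀ p, Orthonormal ℝ (v p))
    (hspan : ∀ p j, ((EuclideanSpace.equiv (Fin (Ip p)) ℝ).symm (fun i => A p i j)) ∈
        Submodule.span ℝ (Set.range (v p)))
    (c : Fin P → ℝ) (hc : ∀ p, 0 ≤ c p)
    (hbound : ∀ p r i, (v p r i) ^ 2 ≤ c p) :
    coherence (khatriRao A) ≤ ∏ p, (k p : ℝ) * c p := by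
  classical
  set w : ((p : Fin P) → Fin (k p)) → EuclideanSpace ℝ ((p : Fin P) → Fin (Ip p)) :=
    fun s => (WithLp.equiv 2 _).symm (fun i => ∏ p, v p (s p) (i p)) with hwdef
  have hwapp : ∀ s i, w s i = ∏ p, v p (s p) (i p) := fun s i => rfl
  -- inner products of the Kronecker family factorize
  have hinner : ∀ s t, (inner ℝ (w s) (w t) : ℝ)
      = ∏ p, (inner ℝ (v p (s p)) (v p (t p)) : ℝ) := by
    intro s t
    simp only [PiLp.inner_apply, RCLike.inner_apply, starRingEnd_apply, star_trivial]
    have h := Finset.prod_univ_sum (fun p : Fin P => (Finset.univ : Finset (Fin (Ip p))))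
      (fun p j => v p (t p) j * v p (s p) j)
    rw [Fintype.piFinset_univ] at h
    rw [h]
    apply Finset.sum_congr rfl; intro i _
    rw [hwapp, hwapp, ← Finset.prod_mul_distrib]
  have hworth : Orthonormal ℝ w := by
    rw [orthonormal_iff_ite]
    intro s t
    rw [hinner]
    by_cases hst : s = t
    · subst hst
      simp only [if_pos rfl]
      apply Finset.prod_eq_one
      intro p _
      rw [orthonormal_iff_ite.1 (hv p), if_pos rfl]
    · rw [if_neg hst]
      obtain ⟨p, hp⟩ : ∃ p, s p ≠ t p := by
        by_contra hcon; push_neg at hcon; exact hst (funext hcon)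
      apply Finset.prod_eq_zero (Finset.mem_univ p)
      rw [orthonormal_iff_ite.1 (hv p), if_neg hp]
  -- column span of the Khatri-Rao product is inside the span of the w's
  have hspanKR : Submodule.span ℝ (Set.range fun j : Fin R =>
      (EuclideanSpace.equiv ((p : Fin P) → Fin (Ip p)) ℝ).symm (fun i => khatriRao A i j)) ≤
      Submodule.span ℝ (Set.range w) := by
    rw [Submodule.span_le]
    rintro _ ⟨j, rfl⟩
    have hch : ∀ p, ∃ cp : Fin (k p) → ℝ,
        ∑ r, cp r • v p r = (EuclideanSpace.equiv (Fin (Ip p)) ℝ).symm (fun i => A p i j) :=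
      fun p => (Submodule.mem_span_range_iff_exists_fun ℝ).1 (hspan p j)
    choose cp hcp using hch
    have hcol : ∀ p i0, ∑ r, cp p r * v p r i0 = A p i0 j := by
      intro p i0
      have := congrArg (fun z : EuclideanSpace ℝ (Fin (Ip p)) => z i0) (hcp p)
      simp only at this
      rw [euclid_sum_apply] at this
      simpa [PiLp.smul_apply, smul_eq_mul] using this
    apply (Submodule.mem_span_range_iff_exists_fun ℝ).2
    refine ⟨fun s => ∏ p, cp p (s p), ?_⟩
    ext i
    rw [euclid_sum_apply]
    have h1 : ∀ s : (p : Fin P) → Fin (k p),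
        ((∏ p, cp p (s p)) • w s) i = ∏ p, (cp p (s p) * v p (s p) (i p)) := by
      intro s
      rw [PiLp.smul_apply, smul_eq_mul, hwapp, ← Finset.prod_mul_distrib]
    simp only [h1]
    have h := Finset.prod_univ_sum (fun p : Fin P => (Finset.univ : Finset (Fin (k p))))
      (fun p r => cp p r * v p r (i p))
    rw [Fintype.piFinset_univ] at h
    rw [← h]
    have : ((EuclideanSpace.equiv ((p : Fin P) → Fin (Ip p)) ℝ).symm
        (fun i' => khatriRao A i' j)) i = ∏ p, A p (i p) j := rfl
    rw [this]
    apply Finset.prod_congr rfl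
    intro p _
    exact hcol p (i p)
  -- leverage score bound
  have hlev : ∀ i, levScore (khatriRao A) i ≤ ∏ p, (k p : ℝ) * c p := by
    intro i
    refine (levScore_le_sum_sq (khatriRao A) w hworth hspanKR i).trans ?_
    have h2 : ∑ s, (w s i) ^ 2 = ∏ p, ∑ r, (v p r (i p)) ^ 2 := by
      have h := Finset.prod_univ_sum (fun p : Fin P => (Finset.univ : Finset (Fin (k p))))
        (fun p r => (v p r (i p)) ^ 2)
      rw [Fintype.piFinset_univ] at h
      rw [h]
      apply Finset.sum_congr rfl; intro s _
      rw [hwapp, ← Finset.prod_pow]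
    rw [h2]
    apply Finset.prod_le_prod
    · intro p _; positivity
    · intro p _
      calc ∑ r, (v p r (i p)) ^ 2 ≤ ∑ _r : Fin (k p), c p :=
            Finset.sum_le_sum fun r _ => hbound p r (i p)
        _ = (k p : ℝ) * c p := by
            rw [Finset.sum_const, nsmul_eq_mul]; simp
  -- conclude via the supremum
  have hne : Nonempty ((p : Fin P) → Fin (Ip p)) :=
    ⟨fun p => ⟨0, hIp p⟩⟩
  exact ciSup_le hlev

lemma rad_sum_exp (n : ℕ) (f : Fin n → ℝ) :
    ∑ d : Fin n → Bool, Real.exp (∑ j, (if d j then (1:ℝ) else -1) * f j)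
      = ∏ j, (Real.exp (f j) + Real.exp (-f j)) := by
  classical
  have h := Finset.prod_univ_sum (fun _ : Fin n => (Finset.univ : Finset Bool))
    (fun j b => Real.exp ((if b then (1:ℝ) else -1) * f j))
  rw [Fintype.piFinset_univ] at h
  calc ∑ d : Fin n → Bool, Real.exp (∑ j, (if d j then (1:ℝ) else -1) * f j)
      = ∑ d : Fin n → Bool, ∏ j, Real.exp ((if d j then (1:ℝ) else -1) * f j) := by
        simp_rw [Real.exp_sum]
    _ = ∏ j, ∑ b : Bool, Real.exp ((if b then (1:ℝ) else -1) * f j) := h.symm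
    _ = ∏ j, (Real.exp (f j) + Real.exp (-f j)) := by
        apply Finset.prod_congr rfl; intro j _
        simp [Fintype.sum_bool, neg_one_mul]

lemma rad_tail_one_sided (n : ℕ) (a : Fin n → ℝ) (t : ℝ) (ht : 0 < t)
    (hs : 0 < ∑ j, a j ^ 2) :
    ((Finset.univ.filter fun d : Fin n → Bool =>
        t ≤ ∑ j, (if d j then (1:ℝ) else -1) * a j).card : ℝ)
      ≤ Real.exp (-t ^ 2 / (2 * ∑ j, a j ^ 2)) * 2 ^ n := by
  classical
  set σ2 := ∑ j, a j ^ 2 with hσ2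
  set lam := t / σ2 with hlam
  have hlampos : 0 < lam := div_pos ht hs
  -- key MGF bound
  have hmgf : ∑ d : Fin n → Bool, Real.exp (lam * ∑ j, (if d j then (1:ℝ) else -1) * a j)
      ≤ Real.exp (lam ^ 2 * σ2 / 2) * 2 ^ n := by
    have heq : ∀ d : Fin n → Bool, lam * ∑ j, (if d j then (1:ℝ) else -1) * a j
        = ∑ j, (if d j then (1:ℝ) else -1) * (lam * a j) := by
      intro d; rw [Finset.mul_sum]; apply Finset.sum_congr rfl; intro j _; ring
    simp_rw [heq]
    rw [rad_sum_exp n (fun j => lam * a j)]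
    calc ∏ j, (Real.exp (lam * a j) + Real.exp (-(lam * a j)))
        ≤ ∏ j, 2 * Real.exp ((lam * a j) ^ 2 / 2) := by
          apply Finset.prod_le_prod
          · intro j _; positivity
          · intro j _
            have := Real.cosh_le_exp_half_sq (lam * a j)
            rw [Real.cosh_eq] at this
            linarith
      _ = 2 ^ n * ∏ j, Real.exp ((lam * a j) ^ 2 / 2) := by
          rw [Finset.prod_mul_distrib]; simp
      _ = Real.exp (lam ^ 2 * σ2 / 2) * 2 ^ n := by
          rw [← Real.exp_sum]
          rw [mul_comm]
          congr 1
          rw [hσ2, Finset.mul_sum, Finset.sum_div]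
          congr 1
          apply Finset.sum_congr rfl; intro j _; ring
  have hcard : ((Finset.univ.filter fun d : Fin n → Bool =>
      t ≤ ∑ j, (if d j then (1:ℝ) else -1) * a j).card : ℝ) * Real.exp (lam * t)
      ≤ ∑ d : Fin n → Bool, Real.exp (lam * ∑ j, (if d j then (1:ℝ) else -1) * a j) := by
    calc ((Finset.univ.filter fun d : Fin n → Bool =>
          t ≤ ∑ j, (if d j then (1:ℝ) else -1) * a j).card : ℝ) * Real.exp (lam * t)
        = ∑ _d ∈ (Finset.univ.filter fun d : Fin n → Bool =>
            t ≤ ∑ j, (if d j then (1:ℝ) else -1) * a j), Real.exp (lam * t) := by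
          rw [Finset.sum_const, nsmul_eq_mul]
      _ ≤ ∑ d ∈ (Finset.univ.filter fun d : Fin n → Bool =>
            t ≤ ∑ j, (if d j then (1:ℝ) else -1) * a j),
            Real.exp (lam * ∑ j, (if d j then (1:ℝ) else -1) * a j) := by
          apply Finset.sum_le_sum
          intro d hd
          have := (Finset.mem_filter.1 hd).2
          exact Real.exp_le_exp.2 (mul_le_mul_of_nonneg_left this hlampos.le)
      _ ≤ ∑ d : Fin n → Bool, Real.exp (lam * ∑ j, (if d j then (1:ℝ) else -1) * a j) :=
          Finset.sum_le_sum_of_subset_of_nonneg (Finset.filter_subset _ _)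
            (fun d _ _ => (Real.exp_pos _).le)
  have hE : (0:ℝ) < Real.exp (lam * t) := Real.exp_pos _
  have h1 : ((Finset.univ.filter fun d : Fin n → Bool =>
      t ≤ ∑ j, (if d j then (1:ℝ) else -1) * a j).card : ℝ)
      ≤ Real.exp (lam ^ 2 * σ2 / 2) * 2 ^ n / Real.exp (lam * t) := by
    rw [le_div_iff₀ hE]
    exact hcard.trans hmgf
  refine h1.trans (le_of_eq ?_)
  rw [div_eq_mul_inv, mul_right_comm, ← Real.exp_neg, ← Real.exp_add]
  congr 2
  rw [hlam]
  field_simp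
  ring

lemma rad_tail_abs (n : ℕ) (a : Fin n → ℝ) (t : ℝ) (ht : 0 < t)
    (hs : 0 < ∑ j, a j ^ 2) :
    ((Finset.univ.filter fun d : Fin n → Bool =>
        t ≤ |∑ j, (if d j then (1:ℝ) else -1) * a j|).card : ℝ)
      ≤ 2 * Real.exp (-t ^ 2 / (2 * ∑ j, a j ^ 2)) * 2 ^ n := by
  classical
  have hneg : ∀ d : Fin n → Bool,
      ∑ j, (if d j then (1:ℝ) else -1) * (-a j)
        = -∑ j, (if d j then (1:ℝ) else -1) * a j := by
    intro d
    rw [← Finset.sum_neg_distrib]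
    apply Finset.sum_congr rfl; intro j _; ring
  have hsub : (Finset.univ.filter fun d : Fin n → Bool =>
      t ≤ |∑ j, (if d j then (1:ℝ) else -1) * a j|)
      ⊆ (Finset.univ.filter fun d : Fin n → Bool =>
          t ≤ ∑ j, (if d j then (1:ℝ) else -1) * a j)
        ∪ (Finset.univ.filter fun d : Fin n → Bool =>
          t ≤ ∑ j, (if d j then (1:ℝ) else -1) * (-a j)) := by
    intro d hd
    have hd' := (Finset.mem_filter.1 hd).2
    rcases abs_cases (∑ j, (if d j then (1:ℝ) else -1) * a j) with ⟨he, _⟩ | ⟨he, _⟩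
    · exact Finset.mem_union_left _ (Finset.mem_filter.2 ⟨Finset.mem_univ _, he ▸ hd'⟩)
    · refine Finset.mem_union_right _ (Finset.mem_filter.2 ⟨Finset.mem_univ _, ?_⟩)
      rw [hneg d, ← he]; exact hd'
  have hs' : 0 < ∑ j, (-a j) ^ 2 := by simpa using hs
  have h1 := rad_tail_one_sided n a t ht hs
  have h2 := rad_tail_one_sided n (fun j => -a j) t ht hs'
  simp only [neg_sq] at h2
  have := Finset.card_le_card hsub
  have hu := Finset.card_union_le
    (Finset.univ.filter fun d : Fin n → Bool =>
      t ≤ ∑ j, (if d j then (1:ℝ) else -1) * a j)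
    (Finset.univ.filter fun d : Fin n → Bool =>
      t ≤ ∑ j, (if d j then (1:ℝ) else -1) * (-a j))
  have hc : ((Finset.univ.filter fun d : Fin n → Bool =>
      t ≤ |∑ j, (if d j then (1:ℝ) else -1) * a j|).card : ℝ)
      ≤ ((Finset.univ.filter fun d : Fin n → Bool =>
          t ≤ ∑ j, (if d j then (1:ℝ) else -1) * a j).card : ℝ)
        + ((Finset.univ.filter fun d : Fin n → Bool =>
          t ≤ ∑ j, (if d j then (1:ℝ) else -1) * (-a j)).card : ℝ) := by
    exact_mod_cast le_trans (Nat.cast_le.2 this) (Nat.cast_le.2 hu)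
  calc ((Finset.univ.filter fun d : Fin n → Bool =>
      t ≤ |∑ j, (if d j then (1:ℝ) else -1) * a j|).card : ℝ)
      ≤ _ + _ := hc
    _ ≤ Real.exp (-t ^ 2 / (2 * ∑ j, a j ^ 2)) * 2 ^ n
        + Real.exp (-t ^ 2 / (2 * ∑ j, a j ^ 2)) * 2 ^ n := add_le_add h1 h2
    _ = 2 * Real.exp (-t ^ 2 / (2 * ∑ j, a j ^ 2)) * 2 ^ n := by ring

lemma good_card (I R : ℕ) (hI : 0 < I) (hR : 0 < R) (η : ℝ) (hη0 : 0 < η) (hη1 : η < 1)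
    (k : ℕ) (hk : k ≤ R) (a : Fin I → Fin k → Fin I → ℝ)
    (hvar : ∀ i r, ∑ j, a i r j ^ 2 = 1 / I) :
    (1 - η) * (Fintype.card (Fin I → Bool) : ℝ) ≤
      ((Finset.univ.filter fun d : Fin I → Bool =>
        ∀ i r, (∑ j, (if d j then (1:ℝ) else -1) * a i r j) ^ 2
          ≤ 2 * Real.log (2 * I * R / η) / I).card : ℝ) := by
  classical
  set L := Real.log (2 * I * R / η) with hL
  have hIR : (1:ℝ) ≤ (I:ℝ) * R := by
    have : (1:ℝ) ≤ (I:ℝ) := by exact_mod_cast hI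
    have : (1:ℝ) ≤ (R:ℝ) := by exact_mod_cast hR
    nlinarith [show (1:ℝ) ≤ (I:ℝ) from by exact_mod_cast hI]
  have hx1 : 1 < 2 * (I:ℝ) * R / η := by
    rw [lt_div_iff₀ hη0]
    nlinarith
  have hLpos : 0 < L := Real.log_pos hx1
  have hIpos : (0:ℝ) < I := by exact_mod_cast hI
  set t := Real.sqrt (2 * L / I) with htdef
  have htsq : t ^ 2 = 2 * L / I := Real.sq_sqrt (by positivity)
  have htpos : 0 < t := Real.sqrt_pos.2 (by positivity)
  -- tail bound for each (i, r)
  have htail : ∀ i : Fin I, ∀ r : Fin k,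
      ((Finset.univ.filter fun d : Fin I → Bool =>
        t ≤ |∑ j, (if d j then (1:ℝ) else -1) * a i r j|).card : ℝ)
      ≤ η / ((I:ℝ) * R) * 2 ^ I := by
    intro i r
    have hs : 0 < ∑ j, a i r j ^ 2 := by rw [hvar]; positivity
    have h := rad_tail_abs I (a i r) t htpos hs
    rw [hvar i r] at h
    have harg : -t ^ 2 / (2 * (1 / (I:ℝ))) = -L := by
      rw [htsq]; field_simp
    rw [harg] at h
    have hexp : Real.exp (-L) = η / (2 * (I:ℝ) * R) := by
      rw [hL, Real.exp_neg, Real.exp_log (by positivity)]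
      rw [inv_div]
    rw [hexp] at h
    calc _ ≤ 2 * (η / (2 * (I:ℝ) * R)) * 2 ^ I := h
      _ = η / ((I:ℝ) * R) * 2 ^ I := by
          field_simp
  -- the bad set is contained in the union of the tails
  set Good := Finset.univ.filter fun d : Fin I → Bool =>
    ∀ i r, (∑ j, (if d j then (1:ℝ) else -1) * a i r j) ^ 2 ≤ 2 * L / I with hGood
  have hbad : Finset.univ \ Good ⊆
      (Finset.univ : Finset (Fin I × Fin k)).biUnion (fun ir =>
        Finset.univ.filter fun d : Fin I → Bool =>
          t ≤ |∑ j, (if d j then (1:ℝ) else -1) * a ir.1 ir.2 j|) := by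
    intro d hd
    rw [Finset.mem_sdiff, hGood, Finset.mem_filter] at hd
    push_neg at hd
    obtain ⟨i, r, hir⟩ := hd.2 hd.1
    refine Finset.mem_biUnion.2 ⟨(i, r), Finset.mem_univ _, Finset.mem_filter.2
      ⟨Finset.mem_univ _, ?_⟩⟩
    have h1 : t ^ 2 ≤ (∑ j, (if d j then (1:ℝ) else -1) * a i r j) ^ 2 := by
      rw [htsq]; exact hir.le
    calc t = Real.sqrt (t ^ 2) := (Real.sqrt_sq htpos.le).symm
      _ ≤ Real.sqrt ((∑ j, (if d j then (1:ℝ) else -1) * a i r j) ^ 2) :=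
          Real.sqrt_le_sqrt h1
      _ = |∑ j, (if d j then (1:ℝ) else -1) * a i r j| := Real.sqrt_sq_eq_abs _
  -- count
  have hbadcard : ((Finset.univ \ Good).card : ℝ) ≤ η * 2 ^ I := by
    have h1 : ((Finset.univ \ Good).card : ℝ) ≤
        ∑ ir : Fin I × Fin k, ((Finset.univ.filter fun d : Fin I → Bool =>
          t ≤ |∑ j, (if d j then (1:ℝ) else -1) * a ir.1 ir.2 j|).card : ℝ) := by
      have := (Finset.card_le_card hbad).trans (Finset.card_biUnion_le)
      exact_mod_cast le_trans (Nat.cast_le.2 this) (le_of_eq (Nat.cast_sum _ _))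
    refine h1.trans ?_
    calc ∑ ir : Fin I × Fin k, ((Finset.univ.filter fun d : Fin I → Bool =>
          t ≤ |∑ j, (if d j then (1:ℝ) else -1) * a ir.1 ir.2 j|).card : ℝ)
        ≤ ∑ _ir : Fin I × Fin k, η / ((I:ℝ) * R) * 2 ^ I :=
          Finset.sum_le_sum fun ir _ => htail ir.1 ir.2
      _ = (I * k : ℕ) * (η / ((I:ℝ) * R) * 2 ^ I) := by
          simp [Finset.sum_const, Fintype.card_prod]
          try ring
      _ ≤ ((I:ℝ) * R) * (η / ((I:ℝ) * R) * 2 ^ I) := by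
          apply mul_le_mul_of_nonneg_right
          · push_cast
            have : (k:ℝ) ≤ R := by exact_mod_cast hk
            nlinarith
          · positivity
      _ = η * 2 ^ I := by field_simp
  have hcardall : ((Finset.univ : Finset (Fin I → Bool)).card : ℝ) = 2 ^ I := by
    simp [Finset.card_univ]
  have hGsub : Good ⊆ Finset.univ := Finset.filter_subset _ _
  have hsplit : (Good.card : ℝ) = 2 ^ I - ((Finset.univ \ Good).card : ℝ) := by
    rw [Finset.card_sdiff_of_subset hGsub]
    rw [Nat.cast_sub (Finset.card_le_card hGsub), hcardall]
    ring
  have : (1 - η) * (2:ℝ) ^ I ≤ (Good.card : ℝ) := by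
    rw [hsplit]; nlinarith
  calc (1 - η) * (Fintype.card (Fin I → Bool) : ℝ) = (1 - η) * 2 ^ I := by
        simp
    _ ≤ (Good.card : ℝ) := this
    _ = _ := by rw [hGood]

lemma signDiag_orth {I : ℕ} (H : Matrix (Fin I) (Fin I) ℝ) (hHorth : H * Hᵀ = 1)
    (d : Fin I → Bool) : (H * signDiag d)ᵀ * (H * signDiag d) = 1 := by
  have hH : Hᵀ * H = 1 := mul_eq_one_comm.mp hHorth
  rw [Matrix.transpose_mul]
  rw [signDiag, Matrix.diagonal_transpose]
  calc Matrix.diagonal (fun i => if d i then (1:ℝ) else -1) * Hᵀ *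
        (H * Matrix.diagonal (fun i => if d i then (1:ℝ) else -1))
      = Matrix.diagonal (fun i => if d i then (1:ℝ) else -1) * (Hᵀ * H) *
        Matrix.diagonal (fun i => if d i then (1:ℝ) else -1) := by
        rw [Matrix.mul_assoc, Matrix.mul_assoc, Matrix.mul_assoc]
    _ = Matrix.diagonal (fun i => if d i then (1:ℝ) else -1) *
        Matrix.diagonal (fun i => if d i then (1:ℝ) else -1) := by rw [hH, Matrix.mul_one]
    _ = 1 := by
        rw [Matrix.diagonal_mul_diagonal]
        convert Matrix.diagonal_one
        rename_i i
        by_cases h : d i <;> simp [h]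

lemma mulVec_dot {I : ℕ} (M : Matrix (Fin I) (Fin I) ℝ) (hM : Mᵀ * M = 1)
    (x y : Fin I → ℝ) : (M *ᵥ x) ⬝ᵥ (M *ᵥ y) = x ⬝ᵥ y := by
  rw [Matrix.dotProduct_mulVec, Matrix.vecMul_mulVec, hM, Matrix.vecMul_one]

example : True := trivial

lemma factor_props {I R : ℕ} (hI : 0 < I)
    (H : Matrix (Fin I) (Fin I) ℝ) (hHorth : H * Hᵀ = 1)
    (hHabs : ∀ i j, |H i j| = 1 / Real.sqrt I)
    (X : Matrix (Fin I) (Fin R) ℝ) :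
    ∃ (k : ℕ) (ub : Fin k → Fin I → ℝ), k ≤ R ∧
      (∀ i r, ∑ j, (H i j * ub r j) ^ 2 = 1 / I) ∧
      (∀ d : Fin I → Bool,
        Orthonormal ℝ (fun r => ((WithLp.equiv 2 (Fin I → ℝ)).symm
            ((H * signDiag d) *ᵥ ub r) : EuclideanSpace ℝ (Fin I)))) ∧
      (∀ d : Fin I → Bool, ∀ jcol : Fin R,
        ((EuclideanSpace.equiv (Fin I) ℝ).symm (fun i => (H * signDiag d * X) i jcol)) ∈
          Submodule.span ℝ (Set.range (fun r => ((WithLp.equiv 2 (Fin I → ℝ)).symm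
            ((H * signDiag d) *ᵥ ub r) : EuclideanSpace ℝ (Fin I))))) ∧
      (∀ (d : Fin I → Bool) i r, ((WithLp.equiv 2 (Fin I → ℝ)).symm ((H * signDiag d) *ᵥ ub r)
          : EuclideanSpace ℝ (Fin I)) i
        = ∑ j, (if d j then (1:ℝ) else -1) * (H i j * ub r j)) := by
  classical
  set W : Submodule ℝ (EuclideanSpace ℝ (Fin I)) := Submodule.span ℝ (Set.range fun j : Fin R =>
    ((WithLp.equiv 2 (Fin I → ℝ)).symm (fun i => X i j) : EuclideanSpace ℝ (Fin I))) with hW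
  set b := stdOrthonormalBasis ℝ W with hb
  have hbi : ∀ r r', (inner ℝ ((b r : EuclideanSpace ℝ (Fin I))) ((b r' : EuclideanSpace ℝ (Fin I))) : ℝ)
      = if r = r' then 1 else 0 := by
    intro r r'
    rw [← Submodule.coe_inner]
    exact orthonormal_iff_ite.1 b.orthonormal r r'
  have hsum : ∀ r r', ∑ j, (b r : EuclideanSpace ℝ (Fin I)) j * (b r' : EuclideanSpace ℝ (Fin I)) j
      = if r = r' then 1 else 0 := by
    intro r r'
    rw [← hbi r r']
    simp [PiLp.inner_apply, RCLike.inner_apply]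
    exact Finset.sum_congr rfl fun _ _ => mul_comm _ _
  have hM : ∀ d : Fin I → Bool, (H * signDiag d)ᵀ * (H * signDiag d) = 1 :=
    fun d => signDiag_orth H hHorth d
  have happ : ∀ (d : Fin I → Bool) (x : Fin I → ℝ) (i : Fin I),
      ((WithLp.equiv 2 (Fin I → ℝ)).symm ((H * signDiag d) *ᵥ x) : EuclideanSpace ℝ (Fin I)) i
        = ((H * signDiag d) *ᵥ x) i := fun _ _ _ => rfl
  refine ⟨Module.finrank ℝ W, fun r j => ((b r : EuclideanSpace ℝ (Fin I)) j), ?_, ?_, ?_, ?_, ?_⟩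
  · -- rank bound
    have h := finrank_range_le_card (R := ℝ) (fun j : Fin R =>
      ((WithLp.equiv 2 (Fin I → ℝ)).symm (fun i => X i j) : EuclideanSpace ℝ (Fin I)))
    rw [hW]; simpa [Set.finrank] using h
  · -- variance
    intro i r
    have hnorm : ∑ j, ((b r : EuclideanSpace ℝ (Fin I)) j) ^ 2 = 1 := by
      have := hsum r r
      rw [if_pos rfl] at this
      rw [← this]
      apply Finset.sum_congr rfl; intro j _; ring
    have hH2 : ∀ j, (H i j) ^ 2 = 1 / I := by
      intro j
      rw [← sq_abs, hHabs i j]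
      rw [div_pow, one_pow, Real.sq_sqrt (Nat.cast_nonneg I)]
    calc ∑ j, (H i j * (b r : EuclideanSpace ℝ (Fin I)) j) ^ 2
        = ∑ j, (1 / I) * ((b r : EuclideanSpace ℝ (Fin I)) j) ^ 2 := by
          apply Finset.sum_congr rfl; intro j _
          rw [mul_pow, hH2 j]
      _ = 1 / I := by rw [← Finset.mul_sum, hnorm, mul_one]
  · -- orthonormality
    intro d
    rw [orthonormal_iff_ite]
    intro r r'
    have : (inner ℝ ((WithLp.equiv 2 (Fin I → ℝ)).symm ((H * signDiag d) *ᵥ fun j => (b r : EuclideanSpace ℝ (Fin I)) j) : EuclideanSpace ℝ (Fin I))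
        ((WithLp.equiv 2 (Fin I → ℝ)).symm ((H * signDiag d) *ᵥ fun j => (b r' : EuclideanSpace ℝ (Fin I)) j) : EuclideanSpace ℝ (Fin I)) : ℝ)
        = ((H * signDiag d) *ᵥ fun j => (b r : EuclideanSpace ℝ (Fin I)) j) ⬝ᵥ
          ((H * signDiag d) *ᵥ fun j => (b r' : EuclideanSpace ℝ (Fin I)) j) := by
      simp [PiLp.inner_apply, RCLike.inner_apply, dotProduct]
      exact Finset.sum_congr rfl fun _ _ => mul_comm _ _
    rw [this, mulVec_dot _ (hM d), dotProduct, hsum r r']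
  · -- span
    intro d jcol
    have hWb : Submodule.span ℝ (Set.range (fun r => ((b r : EuclideanSpace ℝ (Fin I))))) = W := by
      have h1 : Set.range (fun r => ((b r : EuclideanSpace ℝ (Fin I)))) =
          W.subtype '' Set.range b := by
        rw [← Set.range_comp]; rfl
      have h2 : Submodule.span ℝ (Set.range ⇑b) = ⊤ := by
        rw [← b.coe_toBasis]; exact b.toBasis.span_eq
      rw [h1, ← Submodule.map_span, h2, Submodule.map_top, Submodule.range_subtype]
    have hXcol : ((WithLp.equiv 2 (Fin I → ℝ)).symm (fun i => X i jcol) : EuclideanSpace ℝ (Fin I)) ∈ W := by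
      rw [hW]
      exact Submodule.subset_span ⟨jcol, rfl⟩
    rw [← hWb] at hXcol
    obtain ⟨cc, hcc⟩ := (Submodule.mem_span_range_iff_exists_fun ℝ).1 hXcol
    have hccj : ∀ j, ∑ r, cc r * (b r : EuclideanSpace ℝ (Fin I)) j = X j jcol := by
      intro j
      have := congrArg (fun z : EuclideanSpace ℝ (Fin I) => z j) hcc
      simp only at this
      rw [euclid_sum_apply] at this
      simpa [PiLp.smul_apply, smul_eq_mul] using this
    apply (Submodule.mem_span_range_iff_exists_fun ℝ).2
    refine ⟨cc, ?_⟩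
    ext i
    rw [euclid_sum_apply]
    have h2 : ∀ r, (cc r • ((WithLp.equiv 2 (Fin I → ℝ)).symm
        ((H * signDiag d) *ᵥ fun j => (b r : EuclideanSpace ℝ (Fin I)) j) : EuclideanSpace ℝ (Fin I))) i
        = cc r * ∑ j, (H * signDiag d) i j * (b r : EuclideanSpace ℝ (Fin I)) j := by
      intro r
      rw [PiLp.smul_apply, smul_eq_mul]
      rfl
    simp only [h2]
    have hmv : ∀ r, (((H * signDiag d) *ᵥ fun j => (b r : EuclideanSpace ℝ (Fin I)) j) : Fin I → ℝ) i
        = ∑ j, (H * signDiag d) i j * (b r : EuclideanSpace ℝ (Fin I)) j := fun r => rfl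
    have hrhs : ((EuclideanSpace.equiv (Fin I) ℝ).symm (fun i' => (H * signDiag d * X) i' jcol)) i
        = ∑ j, (H * signDiag d) i j * X j jcol := by
      rw [show ((EuclideanSpace.equiv (Fin I) ℝ).symm (fun i' => (H * signDiag d * X) i' jcol)) i
          = (H * signDiag d * X) i jcol from rfl, Matrix.mul_apply]
    rw [hrhs]
    have hmul : ∀ r, cc r * ∑ j, (H * signDiag d) i j * (b r : EuclideanSpace ℝ (Fin I)) j
        = ∑ j, (H * signDiag d) i j * (cc r * (b r : EuclideanSpace ℝ (Fin I)) j) := by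
      intro r
      rw [Finset.mul_sum]
      apply Finset.sum_congr rfl; intro j _; ring
    calc ∑ r, cc r * (((H * signDiag d) *ᵥ fun j => (b r : EuclideanSpace ℝ (Fin I)) j) : Fin I → ℝ) i
        = ∑ r, ∑ j, (H * signDiag d) i j * (cc r * (b r : EuclideanSpace ℝ (Fin I)) j) := by
          apply Finset.sum_congr rfl; intro r _; rw [hmv r, hmul r]
      _ = ∑ j, ∑ r, (H * signDiag d) i j * (cc r * (b r : EuclideanSpace ℝ (Fin I)) j) :=
          Finset.sum_comm
      _ = ∑ j, (H * signDiag d) i j * X j jcol := by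
          apply Finset.sum_congr rfl; intro j _
          rw [← Finset.mul_sum, hccj j]
  · -- entries
    intro d i r
    rw [happ]
    rw [Matrix.mulVec]
    apply Finset.sum_congr rfl; intro j _
    simp only [signDiag, Matrix.mul_diagonal]
    ring

open Classical in
/-- Coherence bound for the Khatri–Rao product of randomized-Hadamard-transformed factors:
for at least a `(1 - Pη)`-fraction of the tuples of sign vectors `d = (d⁽¹⁾, …, d⁽ᴾ⁾)`,
`μ(⊙_p H⁽ᵖ⁾ D⁽ᵖ⁾ X⁽ᵖ⁾) ≤ (1/Ĩ) ∏_p 2 R ln(2 I_p R / η)`. -/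
theorem coherence_khatriRao_randomizedHadamard (P R : ℕ) (hP : 0 < P) (hR : 0 < R)
    (Ip : Fin P → ℕ) (hIp : ∀ p, 0 < Ip p)
    (η : ℝ) (hη : η ∈ Set.Ioo (0 : ℝ) 1)
    (X : (p : Fin P) → Matrix (Fin (Ip p)) (Fin R) ℝ)
    (H : (p : Fin P) → Matrix (Fin (Ip p)) (Fin (Ip p)) ℝ)
    (hHorth : ∀ p, H p * (H p)ᵀ = 1)
    (hHabs : ∀ p i j, |H p i j| = 1 / Real.sqrt (Ip p)) :
    (1 - P * η) * (Fintype.card ((p : Fin P) → Fin (Ip p) → Bool) : ℝ) ≤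
      ((Finset.univ.filter (fun d : (p : Fin P) → Fin (Ip p) → Bool =>
          coherence (khatriRao fun p => H p * signDiag (d p) * X p) ≤
            (1 / ∏ p, (Ip p : ℝ)) *
              ∏ p, 2 * R * Real.log (2 * (Ip p) * R / η))).card : ℝ) := by
  classical
  obtain ⟨hη0, hη1⟩ := hη
  have hfp := fun p => factor_props (hIp p) (H p) (hHorth p) (hHabs p) (X p)
  choose k ub hkR hvar horth hsp hentry using hfp
  have hx1 : ∀ p, 1 < 2 * (Ip p : ℝ) * R / η := by
    intro p
    rw [lt_div_iff₀ hη0]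
    have h1 : (1:ℝ) ≤ (Ip p : ℝ) := by exact_mod_cast hIp p
    have h2 : (1:ℝ) ≤ (R : ℝ) := by exact_mod_cast hR
    nlinarith
  have hLpos : ∀ p, 0 < Real.log (2 * (Ip p : ℝ) * R / η) := fun p => Real.log_pos (hx1 p)
  set Good : (p : Fin P) → Finset (Fin (Ip p) → Bool) := fun p =>
    Finset.univ.filter (fun d => ∀ i r,
      (∑ j, (if d j then (1:ℝ) else -1) * (H p i j * ub p r j)) ^ 2
        ≤ 2 * Real.log (2 * (Ip p : ℝ) * R / η) / (Ip p)) with hGoodDef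
  have hGoodCard : ∀ p, (1 - η) * (Fintype.card (Fin (Ip p) → Bool) : ℝ) ≤ ((Good p).card : ℝ) :=
    fun p => good_card (Ip p) R (hIp p) hR η hη0 hη1 (k p) (hkR p)
      (fun i r j => H p i j * ub p r j) (hvar p)
  have hsubset : Fintype.piFinset Good ⊆
      Finset.univ.filter (fun d : (p : Fin P) → Fin (Ip p) → Bool =>
        coherence (khatriRao fun p => H p * signDiag (d p) * X p) ≤
          (1 / ∏ p, (Ip p : ℝ)) * ∏ p, 2 * R * Real.log (2 * (Ip p) * R / η)) := by
    intro d hd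
    rw [Fintype.mem_piFinset] at hd
    refine Finset.mem_filter.2 ⟨Finset.mem_univ _, ?_⟩
    have hIpos : ∀ p, (0:ℝ) < (Ip p : ℝ) := fun p => by exact_mod_cast hIp p
    have hcoh := coherence_khatriRao_le_s4 hIp (fun p => H p * signDiag (d p) * X p) k
      (fun p => by exact_mod_cast hkR p)
      (fun p r => ((WithLp.equiv 2 (Fin (Ip p) → ℝ)).symm ((H p * signDiag (d p)) *ᵥ ub p r)))
      (fun p => horth p (d p)) (fun p j => hsp p (d p) j)
      (fun p => 2 * Real.log (2 * (Ip p : ℝ) * R / η) / (Ip p))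
      (fun p => div_nonneg (by nlinarith [hLpos p]) (Nat.cast_nonneg _))
      (fun p r i =>
        (congrArg (fun z : ℝ => z ^ 2) (hentry p (d p) i r)).trans_le
          ((Finset.mem_filter.1 (hd p)).2 i r))
    refine hcoh.trans ?_
    have h1 : ∏ p, (k p : ℝ) * (2 * Real.log (2 * (Ip p : ℝ) * R / η) / (Ip p))
        ≤ ∏ p, (2 * R * Real.log (2 * (Ip p : ℝ) * R / η) / (Ip p)) := by
      apply Finset.prod_le_prod
      · intro p _
        exact mul_nonneg (Nat.cast_nonneg _)
          (div_nonneg (by nlinarith [hLpos p]) (Nat.cast_nonneg _))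
      · intro p _
        have hkp : (k p : ℝ) ≤ (R : ℝ) := by exact_mod_cast hkR p
        have hL := hLpos p
        have hI := hIpos p
        rw [← mul_div_assoc]
        apply div_le_div_of_nonneg_right ?_ hI.le
        nlinarith
    refine h1.trans (le_of_eq ?_)
    rw [Finset.prod_div_distrib]
    rw [div_eq_mul_inv, one_div, mul_comm]
  -- counting
  have hbern : (1 - (P:ℝ) * η) ≤ (1 - η) ^ P := by
    have h := one_add_mul_le_pow (show (-2:ℝ) ≤ -η by linarith) P
    have h2 : 1 + (P:ℝ) * (-η) = 1 - (P:ℝ) * η := by ring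
    have h3 : (1 + -η) = (1 - η) := by ring
    rw [h2, h3] at h
    exact h
  have hcardnn : (0:ℝ) ≤ (Fintype.card ((p : Fin P) → Fin (Ip p) → Bool) : ℝ) :=
    Nat.cast_nonneg _
  have hcardpi : (Fintype.card ((p : Fin P) → Fin (Ip p) → Bool) : ℝ)
      = ∏ p, (Fintype.card (Fin (Ip p) → Bool) : ℝ) := by
    rw [Fintype.card_pi]
    push_cast
    rfl
  calc (1 - P * η) * (Fintype.card ((p : Fin P) → Fin (Ip p) → Bool) : ℝ)
      ≤ (1 - η) ^ P * (Fintype.card ((p : Fin P) → Fin (Ip p) → Bool) : ℝ) :=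
        mul_le_mul_of_nonneg_right hbern hcardnn
    _ = ∏ p, ((1 - η) * (Fintype.card (Fin (Ip p) → Bool) : ℝ)) := by
        rw [Finset.prod_mul_distrib, Finset.prod_const, hcardpi]
        simp
    _ ≤ ∏ p, ((Good p).card : ℝ) :=
        Finset.prod_le_prod (fun p _ => mul_nonneg (by linarith) (Nat.cast_nonneg _))
          (fun p _ => hGoodCard p)
    _ = ((Fintype.piFinset Good).card : ℝ) := by
        rw [Fintype.card_piFinset]
        push_cast
        rfl
    _ ≤ _ := by exact_mod_cast Finset.card_le_card hsubset
end
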